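/- Let α be irrational with continued fraction convergents p_m/q_m. Then every point of 𝕋 enters any interval of length ≥ 1/q_m within q_m + q_{m−1} − 1 steps of the rotation by α: for every x ∈ 𝕋 and every interval I ⊂ 𝕋 with |I| ≥ 1/q_m, there exists 0 ≤ k ≤ q_m + q_{m−1} − 1 with x + kα ∈ I. -/

import Mathlib

open GenContFract

/-- Core combinatorial lemma: a two-step rotation walk argument. -/
lemma rotation_core (α θ θ' : ℝ) (A A' : ℤ) (q q' : ℕ)
    (hq : 1 ≤ q) (hq' : 1 ≤ q')
    (hθ'def : (q' : ℝ) * α = A' + θ') (hθdef : (q : ℝ) * α = A + θ)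
    (hsign : θ * θ' < 0)
    (hsum : (q : ℝ) * |θ'| + (q' : ℝ) * |θ| = 1)
    (hθ0 : θ ≠ 0) (hle : |θ| ≤ |θ'|)
    (v L : ℝ) (hL : 1 / (q : ℝ) ≤ L) :
    ∃ k : ℕ, k ≤ q + q' - 1 ∧ Int.fract (v + k * α) < L := by
  have hqR : (1:ℝ) ≤ q := by exact_mod_cast hq
  have hq'R : (1:ℝ) ≤ q' := by exact_mod_cast hq'
  have hqpos : (0:ℝ) < q := lt_of_lt_of_le zero_lt_one hqR
  have hγpos : 0 < |θ| := abs_pos.2 hθ0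
  have hβpos : 0 < |θ'| := lt_of_lt_of_le hγpos hle
  have hβlt : |θ'| < 1 / q := by
    rw [lt_div_iff₀ hqpos]
    nlinarith
  have hβL : |θ'| < L := lt_of_lt_of_le hβlt hL
  have shift_up : ∀ k : ℕ, Int.fract (v + ((k + q' : ℕ) : ℝ) * α)
      = Int.fract (Int.fract (v + k * α) + θ') := by
    intro k
    have h2 := Int.floor_add_fract (v + k * α)
    have h1 : v + ((k + q' : ℕ) : ℝ) * α
        = (Int.fract (v + k * α) + θ') + ((⌊v + k * α⌋ + A' : ℤ) : ℝ) := by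
      push_cast
      linear_combination hθ'def - h2
    rw [h1, Int.fract_add_intCast]
  have shift_down : ∀ k : ℕ, q ≤ k → Int.fract (v + ((k - q : ℕ) : ℝ) * α)
      = Int.fract (Int.fract (v + k * α) - θ) := by
    intro k hk
    have h2 := Int.floor_add_fract (v + k * α)
    have hc : ((k - q : ℕ) : ℝ) = (k : ℝ) - q := by
      push_cast [hk]; ring
    have h1 : v + ((k - q : ℕ) : ℝ) * α
        = (Int.fract (v + k * α) - θ) + ((⌊v + k * α⌋ - A : ℤ) : ℝ) := by
      rw [hc]
      push_cast
      linear_combination -hθdef - h2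
    rw [h1, Int.fract_add_intCast]
  by_contra hcon
  push_neg at hcon
  have hconN : ∀ k, k < q + q' → L ≤ Int.fract (v + k * α) := fun k hk =>
    hcon k (by omega)
  have hθ'ne : θ' ≠ 0 := by
    intro h; rw [h, mul_zero] at hsign; exact lt_irrefl 0 hsign
  rcases lt_or_gt_of_ne hθ'ne with h'neg | h'pos
  · -- θ' < 0, θ > 0 : use the minimum
    have hθpos : 0 < θ := by nlinarith
    obtain ⟨k₀, hk₀mem, hmin⟩ := Finset.exists_min_image (Finset.range (q + q'))
      (fun k => Int.fract (v + k * α)) ⟨0, Finset.mem_range.2 (by omega)⟩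
    simp only [Finset.mem_range] at hk₀mem
    have hf1 := Int.fract_lt_one (v + k₀ * α)
    have hβk₀ : |θ'| < Int.fract (v + k₀ * α) := lt_of_lt_of_le hβL (hconN k₀ hk₀mem)
    rcases le_or_gt q k₀ with hk | hk
    · have hmin2 := hmin (k₀ - q) (Finset.mem_range.2 (by omega))
      rw [shift_down k₀ hk] at hmin2
      have habs : θ ≤ |θ'| := le_trans (le_abs_self θ) hle
      have heq : Int.fract (Int.fract (v + k₀ * α) - θ) = Int.fract (v + k₀ * α) - θ :=
        Int.fract_eq_self.2 ⟨by linarith, by linarith⟩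
      rw [heq] at hmin2
      linarith
    · have hmin2 := hmin (k₀ + q') (Finset.mem_range.2 (by omega))
      rw [shift_up k₀] at hmin2
      have habs : θ' = -|θ'| := by rw [abs_of_neg h'neg]; ring
      have heq : Int.fract (Int.fract (v + k₀ * α) + θ') = Int.fract (v + k₀ * α) + θ' :=
        Int.fract_eq_self.2 ⟨by rw [habs]; linarith, by linarith⟩
      rw [heq] at hmin2
      linarith
  · -- θ' > 0, θ < 0 : use the maximum
    have hθneg : θ < 0 := by nlinarith
    have habsθ : θ = -|θ| := by rw [abs_of_neg hθneg]; ring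
    have habsθ' : θ' = |θ'| := (abs_of_pos h'pos).symm
    obtain ⟨k₀, hk₀mem, hmax⟩ := Finset.exists_max_image (Finset.range (q + q'))
      (fun k => Int.fract (v + k * α)) ⟨0, Finset.mem_range.2 (by omega)⟩
    simp only [Finset.mem_range] at hk₀mem
    have hf1 := Int.fract_lt_one (v + k₀ * α)
    have hf0 := Int.fract_nonneg (v + k₀ * α)
    rcases le_or_gt q k₀ with hk | hk
    · have hmem : k₀ - q < q + q' := by omega
      have hmax2 := hmax (k₀ - q) (Finset.mem_range.2 hmem)
      have hLk := hconN (k₀ - q) hmem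
      rw [shift_down k₀ hk] at hmax2 hLk
      rcases lt_or_ge (Int.fract (v + k₀ * α) - θ) 1 with hlt | hge
      · have heq : Int.fract (Int.fract (v + k₀ * α) - θ) = Int.fract (v + k₀ * α) - θ :=
          Int.fract_eq_self.2 ⟨by linarith, hlt⟩
        rw [heq] at hmax2
        linarith
      · have heq : Int.fract (Int.fract (v + k₀ * α) - θ)
            = Int.fract (v + k₀ * α) - θ - 1 := by
          rw [← Int.fract_sub_intCast (Int.fract (v + k₀ * α) - θ) 1]
          push_cast
          exact Int.fract_eq_self.2 ⟨by linarith, by nlinarith⟩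
        rw [heq] at hLk
        nlinarith
    · have hmem : k₀ + q' < q + q' := by omega
      have hmax2 := hmax (k₀ + q') (Finset.mem_range.2 hmem)
      have hLk := hconN (k₀ + q') hmem
      rw [shift_up k₀] at hmax2 hLk
      rcases lt_or_ge (Int.fract (v + k₀ * α) + θ') 1 with hlt | hge
      · have heq : Int.fract (Int.fract (v + k₀ * α) + θ') = Int.fract (v + k₀ * α) + θ' :=
          Int.fract_eq_self.2 ⟨by linarith, hlt⟩
        rw [heq] at hmax2
        linarith
      · have heq : Int.fract (Int.fract (v + k₀ * α) + θ')
            = Int.fract (v + k₀ * α) + θ' - 1 := by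
          rw [← Int.fract_sub_intCast (Int.fract (v + k₀ * α) + θ') 1]
          push_cast
          exact Int.fract_eq_self.2 ⟨by linarith, by linarith⟩
        rw [heq] at hLk
        linarith



section Glue
variable {α : ℝ}

lemma cf_not_terminatedAt (hα : Irrational α) (n : ℕ) :
    ¬(GenContFract.of α).TerminatedAt n := by
  intro h
  obtain ⟨q, hq⟩ := exists_rat_eq_of_terminates (⟨n, h⟩ : (GenContFract.of α).Terminates)
  exact hα ⟨q, hq.symm⟩

lemma cf_contsAux_int (hα : Irrational α) (n : ℕ) :
    ((∃ a : ℤ, ((GenContFract.of α).contsAux n).a = (a : ℝ)) ∧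
      (∃ b : ℤ, ((GenContFract.of α).contsAux n).b = (b : ℝ))) ∧
    ((∃ a : ℤ, ((GenContFract.of α).contsAux (n + 1)).a = (a : ℝ)) ∧
      (∃ b : ℤ, ((GenContFract.of α).contsAux (n + 1)).b = (b : ℝ))) := by
  induction n with
  | zero =>
    refine ⟨⟨⟨1, ?_⟩, ⟨0, ?_⟩⟩, ⟨⌊α⌋, ?_⟩, ⟨1, ?_⟩⟩ <;>
      simp [zeroth_contAux_eq_one_zero, first_contAux_eq_h_one, of_h_eq_floor]
  | succ n ih =>
    refine ⟨ih.2, ?_⟩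
    obtain ⟨gp, hs⟩ := Option.ne_none_iff_exists'.1 (cf_not_terminatedAt hα n)
    have hrec := contsAux_recurrence (g := GenContFract.of α) hs rfl rfl
    have hga : gp.a = 1 := (of_partNum_eq_one_and_exists_int_partDen_eq hs).1
    obtain ⟨z, hz⟩ := (of_partNum_eq_one_and_exists_int_partDen_eq hs).2
    obtain ⟨⟨a0, ha0⟩, b0, hb0⟩ := ih.1
    obtain ⟨⟨a1, ha1⟩, b1, hb1⟩ := ih.2
    refine ⟨⟨z * a1 + a0, ?_⟩, ⟨z * b1 + b0, ?_⟩⟩ <;>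
      rw [hrec] <;> simp [hga, hz, ha0, ha1, hb0, hb1] <;> push_cast <;> ring

lemma cf_num_den_int (hα : Irrational α) (n : ℕ) :
    (∃ a : ℤ, (GenContFract.of α).nums n = (a : ℝ)) ∧
      (∃ b : ℤ, (GenContFract.of α).dens n = (b : ℝ)) := by
  have h := (cf_contsAux_int hα n).2
  rw [num_eq_conts_a, den_eq_conts_b, nth_cont_eq_succ_nth_contAux]
  exact h

lemma cf_one_le_den (hα : Irrational α) (n : ℕ) :
    (1 : ℝ) ≤ (GenContFract.of α).dens n := by
  have h : ((Nat.fib (n + 1) : ℝ)) ≤ (GenContFract.of α).dens n := by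
    apply succ_nth_fib_le_of_nth_den
    exact Or.inr (cf_not_terminatedAt hα _)
  refine le_trans ?_ h
  exact_mod_cast Nat.one_le_iff_ne_zero.2 (Nat.fib_pos.2 n.succ_pos).ne'
  
lemma cf_den_rec (hα : Irrational α) (n : ℕ) :
    (GenContFract.of α).dens n + (GenContFract.of α).dens (n + 1) ≤
      (GenContFract.of α).dens (n + 2) := by
  obtain ⟨gp, hs⟩ := Option.ne_none_iff_exists'.1 (cf_not_terminatedAt hα (n + 1))
  have hb1 : (1 : ℝ) ≤ gp.b := of_one_le_get?_partDen (partDen_eq_s_b hs)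
  have hga : gp.a = 1 := (of_partNum_eq_one_and_exists_int_partDen_eq hs).1
  have hrec := dens_recurrence (g := GenContFract.of α) hs rfl rfl
  rw [hrec, hga]
  have h0 := cf_one_le_den hα n
  have h1 := cf_one_le_den hα (n + 1)
  nlinarith

lemma cf_theta_ne (hα : Irrational α) (n : ℕ) :
    (GenContFract.of α).dens n * α - (GenContFract.of α).nums n ≠ 0 := by
  intro h0
  obtain ⟨⟨a, ha⟩, b, hb⟩ := cf_num_den_int hα n
  have hb1 : (1 : ℝ) ≤ (b : ℝ) := hb ▸ cf_one_le_den hα n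
  have hbne : (b : ℝ) ≠ 0 := by linarith
  refine hα ⟨(a : ℚ) / (b : ℚ), ?_⟩
  rw [ha, hb] at h0
  push_cast
  rw [div_eq_iff (by exact_mod_cast hbne)]
  linarith

lemma cf_theta_abs_le (hα : Irrational α) (n : ℕ) :
    |(GenContFract.of α).dens n * α - (GenContFract.of α).nums n| ≤
      1 / (GenContFract.of α).dens (n + 1) := by
  set B := (GenContFract.of α).dens n with hB
  set B' := (GenContFract.of α).dens (n + 1) with hB'
  have hBpos : (0 : ℝ) < B := lt_of_lt_of_le zero_lt_one (cf_one_le_den hα n)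
  have hB'pos : (0 : ℝ) < B' := lt_of_lt_of_le zero_lt_one (cf_one_le_den hα (n + 1))
  have h := abs_sub_convs_le (v := α) (cf_not_terminatedAt hα n)
  rw [← hB, ← hB'] at h
  have hconv : (GenContFract.of α).convs n = (GenContFract.of α).nums n / B :=
    conv_eq_num_div_den
  have key : B * α - (GenContFract.of α).nums n = B * (α - (GenContFract.of α).convs n) := by
    rw [hconv]; field_simp
  rw [key, abs_mul, abs_of_pos hBpos]
  calc B * |α - (GenContFract.of α).convs n| ≤ B * (1 / (B * B')) := by
        exact mul_le_mul_of_nonneg_left h hBpos.le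
    _ = 1 / B' := by field_simp


variable {α : ℝ}


lemma cf_det (hα : Irrational α) (n : ℕ) :
    (GenContFract.of α).dens (n + 1) * ((GenContFract.of α).dens n * α - (GenContFract.of α).nums n)
      - (GenContFract.of α).dens n *
        ((GenContFract.of α).dens (n + 1) * α - (GenContFract.of α).nums (n + 1))
      = (-1) ^ n := by
  have hd := SimpContFract.determinant (K := ℝ)
    (s := ⟨GenContFract.of α, GenContFract.of_isSimpContFract α⟩) (cf_not_terminatedAt hα n)
  linear_combination -hd

lemma cf_sign (hα : Irrational α) (n : ℕ) :
    ((GenContFract.of α).dens (n + 1) * α - (GenContFract.of α).nums (n + 1)) *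
      ((GenContFract.of α).dens n * α - (GenContFract.of α).nums n) < 0 := by
  set t0 := (GenContFract.of α).dens n * α - (GenContFract.of α).nums n with ht0
  set t1 := (GenContFract.of α).dens (n + 1) * α - (GenContFract.of α).nums (n + 1) with ht1
  set B0 := (GenContFract.of α).dens n with hB0
  set B1 := (GenContFract.of α).dens (n + 1) with hB1
  set B2 := (GenContFract.of α).dens (n + 2) with hB2
  have h0 : (1:ℝ) ≤ B0 := cf_one_le_den hα n
  have h1 : (1:ℝ) ≤ B1 := cf_one_le_den hα (n + 1)
  have h2 : (1:ℝ) ≤ B2 := cf_one_le_den hα (n + 2)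
  have hr : B0 + B1 ≤ B2 := cf_den_rec hα n
  have ha : |t0| ≤ 1 / B1 := cf_theta_abs_le hα n
  have hb : |t1| ≤ 1 / B2 := cf_theta_abs_le hα (n + 1)
  have hd : B1 * t0 - B0 * t1 = (-1) ^ n := cf_det hα n
  have hane : t0 ≠ 0 := cf_theta_ne hα n
  have hbne : t1 ≠ 0 := cf_theta_ne hα (n + 1)
  by_contra hcon
  push_neg at hcon
  have hprod : 0 < t1 * t0 := lt_of_le_of_ne hcon (by
    intro h; rcases mul_eq_zero.1 h.symm with h' | h' <;> [exact hbne h'; exact hane h'])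
  -- |B1 * t0| ≤ 1
  have ha1 : |B1 * t0| ≤ 1 := by
    rw [abs_mul, abs_of_pos (by linarith : (0:ℝ) < B1)]
    calc B1 * |t0| ≤ B1 * (1 / B1) := mul_le_mul_of_nonneg_left ha (by linarith)
      _ = 1 := by field_simp
  have hb1 : |B0 * t1| < 1 := by
    rw [abs_mul, abs_of_pos (by linarith : (0:ℝ) < B0)]
    calc B0 * |t1| ≤ B0 * (1 / B2) := mul_le_mul_of_nonneg_left hb (by linarith)
      _ < 1 := by rw [mul_one_div, div_lt_one (by linarith)]; linarith
  have habprod : 0 < (B1 * t0) * (B0 * t1) := by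
    have := mul_pos (mul_pos (show (0:ℝ) < B1 by linarith) (show (0:ℝ) < B0 by linarith)) hprod
    nlinarith
  obtain ⟨hA1, hA2⟩ := abs_le.1 ha1
  obtain ⟨hB1', hB2'⟩ := abs_lt.1 hb1
  rcases n.even_or_odd with he | he
  · rw [he.neg_one_pow] at hd
    nlinarith
  · rw [he.neg_one_pow] at hd
    nlinarith

lemma cf_sum (hα : Irrational α) (n : ℕ) :
    (GenContFract.of α).dens (n + 1) *
        |(GenContFract.of α).dens n * α - (GenContFract.of α).nums n|
      + (GenContFract.of α).dens n *
        |(GenContFract.of α).dens (n + 1) * α - (GenContFract.of α).nums (n + 1)| = 1 := by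
  set t0 := (GenContFract.of α).dens n * α - (GenContFract.of α).nums n with ht0
  set t1 := (GenContFract.of α).dens (n + 1) * α - (GenContFract.of α).nums (n + 1) with ht1
  set B0 := (GenContFract.of α).dens n with hB0
  set B1 := (GenContFract.of α).dens (n + 1) with hB1
  have h0 : (1:ℝ) ≤ B0 := cf_one_le_den hα n
  have h1 : (1:ℝ) ≤ B1 := cf_one_le_den hα (n + 1)
  have hd : B1 * t0 - B0 * t1 = (-1) ^ n := cf_det hα n
  have hs := cf_sign hα n
  have hane : t0 ≠ 0 := cf_theta_ne hα n
  rcases lt_or_gt_of_ne hane with hneg | hpos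
  · have hpos1 : 0 < t1 := by nlinarith
    rw [abs_of_neg hneg, abs_of_pos hpos1]
    rcases n.even_or_odd with he | he
    · rw [he.neg_one_pow] at hd
      nlinarith [mul_pos (show (0:ℝ) < B1 by linarith) (neg_pos.2 hneg),
        mul_pos (show (0:ℝ) < B0 by linarith) hpos1]
    · rw [he.neg_one_pow] at hd
      linarith
  · have hneg1 : t1 < 0 := by nlinarith
    rw [abs_of_pos hpos, abs_of_neg hneg1]
    rcases n.even_or_odd with he | he
    · rw [he.neg_one_pow] at hd
      linarith
    · rw [he.neg_one_pow] at hd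
      nlinarith [mul_pos (show (0:ℝ) < B1 by linarith) hpos,
        mul_pos (show (0:ℝ) < B0 by linarith) (neg_pos.2 hneg1)]

lemma cf_abs_le_abs (hα : Irrational α) (n : ℕ) :
    |(GenContFract.of α).dens (n + 1) * α - (GenContFract.of α).nums (n + 1)| ≤
      |(GenContFract.of α).dens n * α - (GenContFract.of α).nums n| := by
  set γ := |(GenContFract.of α).dens (n + 1) * α - (GenContFract.of α).nums (n + 1)| with hγ
  set β := |(GenContFract.of α).dens n * α - (GenContFract.of α).nums n| with hβ
  set B0 := (GenContFract.of α).dens n with hB0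
  set B1 := (GenContFract.of α).dens (n + 1) with hB1
  set B2 := (GenContFract.of α).dens (n + 2) with hB2
  have h0 : (1:ℝ) ≤ B0 := cf_one_le_den hα n
  have h1 : (1:ℝ) ≤ B1 := cf_one_le_den hα (n + 1)
  have h2 : (1:ℝ) ≤ B2 := cf_one_le_den hα (n + 2)
  have hr : B0 + B1 ≤ B2 := cf_den_rec hα n
  have hsum : B1 * β + B0 * γ = 1 := cf_sum hα n
  have hγle : γ ≤ 1 / B2 := cf_theta_abs_le hα (n + 1)
  have hβ0 : 0 ≤ β := abs_nonneg _
  have hγ0 : 0 ≤ γ := abs_nonneg _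
  by_contra hcon
  push_neg at hcon
  have hQγ : B2 * γ ≤ 1 := by
    calc B2 * γ ≤ B2 * (1 / B2) := mul_le_mul_of_nonneg_left hγle (by linarith)
      _ = 1 := by field_simp
  nlinarith [mul_lt_mul_of_pos_left hcon (show (0:ℝ) < B1 by linarith),
    mul_le_mul_of_nonneg_right hr hγ0]


/-- Every point of `𝕋` enters any interval of length `≥ 1/q_m` within
`q_m + q_{m-1} - 1` steps of the rotation by an irrational `α`, where `q_m` are the
continued fraction denominators of `α`. The interval is `[c, c+L) mod 1`; membership of
`x + kα` in it is expressed as `{x + kα - c} < L`. -/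
theorem rotation_hits_interval_within_qm_steps (α : ℝ) (hα : Irrational α) (m : ℕ)
    (hm : 1 ≤ m) (c L : ℝ) (hL : 1 / (GenContFract.of α).dens m ≤ L) (x : ℝ) :
    ∃ k : ℕ, (k : ℝ) ≤ (GenContFract.of α).dens m + (GenContFract.of α).dens (m - 1) - 1 ∧
      Int.fract (x + k * α - c) < L := by
  obtain ⟨n, rfl⟩ : ∃ n, m = n + 1 := ⟨m - 1, by omega⟩
  simp only [Nat.add_sub_cancel]
  obtain ⟨⟨A', hA'⟩, b', hb'⟩ := cf_num_den_int hα n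
  obtain ⟨⟨A, hA⟩, b, hb⟩ := cf_num_den_int hα (n + 1)
  have hb'1 : (1 : ℤ) ≤ b' := by exact_mod_cast hb' ▸ cf_one_le_den hα n
  have hb1 : (1 : ℤ) ≤ b := by exact_mod_cast hb ▸ cf_one_le_den hα (n + 1)
  set q' : ℕ := b'.toNat with hq'def
  set q : ℕ := b.toNat with hqdef
  have hq'cast : ((q' : ℕ) : ℝ) = (GenContFract.of α).dens n := by
    rw [hb', hq'def]
    exact_mod_cast congrArg (Int.cast : ℤ → ℝ) (Int.toNat_of_nonneg (by omega))
  have hqcast : ((q : ℕ) : ℝ) = (GenContFract.of α).dens (n + 1) := by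
    rw [hb, hqdef]
    exact_mod_cast congrArg (Int.cast : ℤ → ℝ) (Int.toNat_of_nonneg (by omega))
  have hq1 : 1 ≤ q := by omega
  have hq'1 : 1 ≤ q' := by omega
  obtain ⟨k, hk, hfr⟩ := rotation_core α
    ((GenContFract.of α).dens (n + 1) * α - (GenContFract.of α).nums (n + 1))
    ((GenContFract.of α).dens n * α - (GenContFract.of α).nums n)
    A A' q q' hq1 hq'1
    (by rw [hq'cast, ← hA']; ring)
    (by rw [hqcast, ← hA]; ring)
    (cf_sign hα n)
    (by rw [hqcast, hq'cast]; exact cf_sum hα n)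
    (cf_theta_ne hα (n + 1))
    (cf_abs_le_abs hα n)
    (x - c) L (by rw [hqcast]; exact hL)
  refine ⟨k, ?_, ?_⟩
  · have hcast : ((q + q' - 1 : ℕ) : ℝ) = (q : ℝ) + (q' : ℝ) - 1 := by
      have : 1 ≤ q + q' := by omega
      push_cast [this]
      ring
    have : (k : ℝ) ≤ ((q + q' - 1 : ℕ) : ℝ) := by exact_mod_cast hk
    rw [hcast, hqcast, hq'cast] at this
    linarith
  · rw [show x + (k : ℝ) * α - c = (x - c) + (k : ℝ) * α by ring]
    exact hfr
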